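/- Let T > 0 and let β, γ ≥ 0 be reals with β + γ > 0. Then there exists a unique function μ : [0, T] → [0, ∞) such that μ is continuous on [0, T], strictly increasing, μ(0) = 0, μ(s) > 0 for s ∈ (0, T], μ is differentiable on (0, T], and μ′(s) = γ²/(2·μ(s)) + (√2/2)·β for every s ∈ (0, T]. Moreover, if γ > 0, then the function s ↦ 1/μ(s) is Lebesgue integrable on (0, T], i.e. ∫₀ᵀ ds/μ(s) < +∞. -/

import Mathlib

open MeasureTheory

/-- A function `μ` is a solution of the singular ODE (3.6)/(3.8) on `[0, T]`:
continuous on `[0, T]`, strictly increasing there, `μ(0) = 0`, nonnegative, positive on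
`(0, T]`, and satisfying `μ′(s) = γ²/(2μ(s)) + (√2/2)β` on `(0, T]`. -/
def IsSolODE (T β γ : ℝ) (μ : ℝ → ℝ) : Prop :=
  ContinuousOn μ (Set.Icc 0 T) ∧ StrictMonoOn μ (Set.Icc 0 T) ∧ μ 0 = 0 ∧
    (∀ s ∈ Set.Icc 0 T, 0 ≤ μ s) ∧ (∀ s ∈ Set.Ioc 0 T, 0 < μ s) ∧
    ∀ s ∈ Set.Ioc 0 T, HasDerivWithinAt μ (γ ^ 2 / (2 * μ s) + Real.sqrt 2 / 2 * β)
      (Set.Icc 0 T) s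

section ODEAux

open Set Filter Topology intervalIntegral



noncomputable def gO (a c u : ℝ) : ℝ := |u| / (a + c * |u|)

noncomputable def GO (a c m : ℝ) : ℝ := ∫ u in (0:ℝ)..m, gO a c u

variable {a c : ℝ}

lemma gO_denom_pos (ha : 0 < a) (hc : 0 ≤ c) (u : ℝ) : 0 < a + c * |u| := by positivity

lemma gO_cont (ha : 0 < a) (hc : 0 ≤ c) : Continuous (gO a c) :=
  continuous_abs.div (by continuity) fun u => (gO_denom_pos ha hc u).ne'

lemma gO_nonneg (ha : 0 < a) (hc : 0 ≤ c) (u : ℝ) : 0 ≤ gO a c u :=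
  div_nonneg (abs_nonneg u) (gO_denom_pos ha hc u).le

lemma gO_pos (ha : 0 < a) (hc : 0 ≤ c) {u : ℝ} (hu : u ≠ 0) : 0 < gO a c u :=
  div_pos (abs_pos.2 hu) (gO_denom_pos ha hc u)

lemma gO_of_nonneg (hu : 0 ≤ u) : gO a c u = u / (a + c * u) := by
  simp [gO, abs_of_nonneg hu]

lemma gO_ge (ha : 0 < a) (hc : 0 ≤ c) {u : ℝ} (hu : 1 ≤ |u|) :
    1 / (a + c) ≤ gO a c u := by
  rw [gO, div_le_div_iff₀ (by positivity) (gO_denom_pos ha hc u)]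
  nlinarith [abs_nonneg u]

lemma hasDerivAt_GO (ha : 0 < a) (hc : 0 ≤ c) (m : ℝ) :
    HasDerivAt (GO a c) (gO a c m) m :=
  integral_hasDerivAt_right ((gO_cont ha hc).intervalIntegrable _ _)
    ((gO_cont ha hc).stronglyMeasurable.stronglyMeasurableAtFilter)
    (gO_cont ha hc).continuousAt

lemma GO_zero : GO a c 0 = 0 := integral_same

lemma continuous_GO (ha : 0 < a) (hc : 0 ≤ c) : Continuous (GO a c) :=
  (Differentiable.continuous fun m => (hasDerivAt_GO ha hc m).differentiableAt)

lemma strictMono_GO (ha : 0 < a) (hc : 0 ≤ c) : StrictMono (GO a c) := by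
  have h1 : StrictMonoOn (GO a c) (Ici 0) := by
    apply strictMonoOn_of_deriv_pos (convex_Ici 0) (continuous_GO ha hc).continuousOn
    intro x hx
    rw [interior_Ici] at hx
    rw [(hasDerivAt_GO ha hc x).deriv]
    exact gO_pos ha hc (ne_of_gt hx)
  have h2 : StrictMonoOn (GO a c) (Iic 0) := by
    apply strictMonoOn_of_deriv_pos (convex_Iic 0) (continuous_GO ha hc).continuousOn
    intro x hx
    rw [interior_Iic] at hx
    rw [(hasDerivAt_GO ha hc x).deriv]
    exact gO_pos ha hc (ne_of_lt hx)
  intro x y hxy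
  rcases le_or_gt 0 x with hx | hx
  · exact h1 hx (hx.trans hxy.le) hxy
  · rcases le_or_gt y 0 with hy | hy
    · exact h2 hx.le hy hxy
    · exact (h2 hx.le (Set.mem_Iic.mpr le_rfl) hx).trans (h1 (Set.mem_Ici.mpr le_rfl) hy.le hy)

lemma GO_ge (ha : 0 < a) (hc : 0 ≤ c) {m : ℝ} (hm : 1 ≤ m) :
    (m - 1) / (a + c) ≤ GO a c m := by
  have hint : ∀ x y : ℝ, IntervalIntegrable (gO a c) volume x y :=
    fun x y => (gO_cont ha hc).intervalIntegrable x y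
  have hsplit : GO a c m = (∫ u in (0:ℝ)..1, gO a c u) + ∫ u in (1:ℝ)..m, gO a c u :=
    (integral_add_adjacent_intervals (hint 0 1) (hint 1 m)).symm
  have h0 : 0 ≤ ∫ u in (0:ℝ)..1, gO a c u :=
    integral_nonneg (by norm_num) fun u _ => gO_nonneg ha hc u
  have h1 : (m - 1) / (a + c) ≤ ∫ u in (1:ℝ)..m, gO a c u := by
    have hmono := integral_mono_on hm (_root_.intervalIntegrable_const (c := 1 / (a + c)))
      (hint 1 m) (fun u hu => gO_ge ha hc (hu.1.trans (le_abs_self u)))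
    rw [intervalIntegral.integral_const, smul_eq_mul, mul_one_div] at hmono
    exact hmono
  linarith

lemma GO_neg (ha : 0 < a) (hc : 0 ≤ c) (m : ℝ) : GO a c (-m) = - GO a c m := by
  have heven : ∀ u : ℝ, gO a c (-u) = gO a c u := fun u => by simp [gO, abs_neg]
  have := integral_comp_neg (a := 0) (b := m) (fun u => gO a c u)
  simp only [heven, neg_zero] at this
  rw [GO, GO, integral_symm, ← this]

lemma tendsto_GO_atTop (ha : 0 < a) (hc : 0 ≤ c) :
    Tendsto (GO a c) atTop atTop := by
  apply tendsto_atTop_mono' atTop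
    (eventually_ge_atTop (1:ℝ) |>.mono fun m hm => GO_ge ha hc hm)
  exact (tendsto_atTop_add_const_right atTop (-1) tendsto_id).atTop_div_const (by positivity)

lemma tendsto_GO_atBot (ha : 0 < a) (hc : 0 ≤ c) :
    Tendsto (GO a c) atBot atBot := by
  have : Tendsto (fun m => - GO a c m) atTop atBot :=
    tendsto_neg_atTop_atBot.comp (tendsto_GO_atTop ha hc)
  have h2 : Tendsto (fun m => GO a c (-m)) atTop atBot := by
    simpa [GO_neg ha hc] using this
  have := h2.comp tendsto_neg_atBot_atTop
  simpa [Function.comp_def] using this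

lemma surjective_GO (ha : 0 < a) (hc : 0 ≤ c) : Function.Surjective (GO a c) :=
  Continuous.surjective (continuous_GO ha hc) (tendsto_GO_atTop ha hc) (tendsto_GO_atBot ha hc)



lemma eq_zero_of_deriv_zero {T : ℝ} (hT : 0 < T) {h : ℝ → ℝ}
    (hcont : ContinuousOn h (Set.Icc 0 T)) (h0 : h 0 = 0)
    (hd : ∀ s ∈ Set.Ioc 0 T, HasDerivWithinAt h 0 (Set.Icc 0 T) s) :
    ∀ s ∈ Set.Icc 0 T, h s = 0 := by
  intro s hs
  rcases eq_or_lt_of_le hs.1 with heq | hspos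
  · rw [← heq]; exact h0
  have key : ∀ ε ∈ Set.Ioc 0 s, h s = h ε := by
    intro ε hε
    have hderiv : ∀ x ∈ Set.Ico ε s, HasDerivWithinAt h 0 (Set.Ici x) x := by
      intro x hx
      have hx' : x ∈ Set.Ioc 0 T := ⟨hε.1.trans_le hx.1, hx.2.le.trans hs.2⟩
      refine (hd x hx').mono_of_mem_nhdsWithin ?_
      rw [mem_nhdsWithin]
      exact ⟨Set.Iio T, isOpen_Iio, lt_of_lt_of_le hx.2 hs.2,
        fun y hy => ⟨hx'.1.le.trans hy.2, hy.1.le⟩⟩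
    exact constant_of_has_deriv_right_zero
      (hcont.mono (Set.Icc_subset_Icc hε.1.le hs.2)) hderiv s ⟨hε.2, le_rfl⟩
  have hne : (𝓝[Set.Ioc 0 s] (0:ℝ)).NeBot := by
    rw [← mem_closure_iff_nhdsWithin_neBot, closure_Ioc hspos.ne]
    exact ⟨le_rfl, hspos.le⟩
  have h1 : Filter.Tendsto h (𝓝[Set.Ioc 0 s] 0) (𝓝 (h 0)) :=
    (hcont 0 ⟨le_rfl, hT.le⟩).mono (fun x hx => ⟨hx.1.le, hx.2.trans hs.2⟩)
  have h2 : Filter.Tendsto (fun _ : ℝ => h s) (𝓝[Set.Ioc 0 s] 0) (𝓝 (h 0)) := by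
    refine h1.congr' ?_
    filter_upwards [self_mem_nhdsWithin] with ε hε
    exact (key ε hε).symm
  rw [h0] at h2
  exact (tendsto_nhds_unique h2 tendsto_const_nhds).symm

lemma exists_sol_pos {T β γ : ℝ} (hT : 0 < T) (hβ : 0 ≤ β) (hγ : 0 < γ) :
    ∃ μ : ℝ → ℝ, IsSolODE T β γ μ := by
  have ha : 0 < γ ^ 2 / 2 := by positivity
  have hc : 0 ≤ Real.sqrt 2 / 2 * β := by positivity
  set E := StrictMono.orderIsoOfSurjective (GO (γ ^ 2 / 2) (Real.sqrt 2 / 2 * β))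
    (strictMono_GO ha hc) (surjective_GO ha hc) with hE
  have hGμ : ∀ s, GO (γ ^ 2 / 2) (Real.sqrt 2 / 2 * β) (E.symm s) = s := fun s =>
    StrictMono.orderIsoOfSurjective_self_symm_apply _ _ _ s
  have hμ0 : E.symm 0 = 0 := by
    have := StrictMono.orderIsoOfSurjective_symm_apply_self
      (GO (γ ^ 2 / 2) (Real.sqrt 2 / 2 * β)) (strictMono_GO ha hc) (surjective_GO ha hc) 0
    rwa [GO_zero] at this
  have hmono : StrictMono fun s => E.symm s := E.symm.strictMono
  have hcont : Continuous fun s => E.symm s := E.symm.continuous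
  have hposIoc : ∀ s ∈ Set.Ioc 0 T, 0 < E.symm s := by
    intro s hs
    simpa [hμ0] using hmono hs.1
  refine ⟨fun s => E.symm s, hcont.continuousOn, hmono.strictMonoOn _, hμ0, ?_, hposIoc, ?_⟩
  · intro s hs
    simpa [hμ0] using hmono.monotone hs.1
  · intro s hs
    have hpos := hposIoc s hs
    have hkey := HasDerivAt.of_local_left_inverse (g := fun s => E.symm s)
      hcont.continuousAt (hasDerivAt_GO ha hc (E.symm s)) (gO_pos ha hc hpos.ne').ne'
      (Filter.Eventually.of_forall hGμ)
    have hval : (gO (γ ^ 2 / 2) (Real.sqrt 2 / 2 * β) (E.symm s))⁻¹ =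
        γ ^ 2 / (2 * E.symm s) + Real.sqrt 2 / 2 * β := by
      rw [gO_of_nonneg hpos.le, inv_div]
      have h1 : E.symm s ≠ 0 := hpos.ne'
      field_simp
    rw [hval] at hkey
    exact hkey.hasDerivWithinAt

lemma sol_eq_GO {T β γ : ℝ} (hT : 0 < T) (hβ : 0 ≤ β) (hγ : 0 < γ) {μ : ℝ → ℝ}
    (hμ : IsSolODE T β γ μ) :
    ∀ s ∈ Set.Icc 0 T, GO (γ ^ 2 / 2) (Real.sqrt 2 / 2 * β) (μ s) = s := by
  obtain ⟨hcont, hmono, h0, hnn, hpos, hderiv⟩ := hμ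
  have ha : 0 < γ ^ 2 / 2 := by positivity
  have hc : 0 ≤ Real.sqrt 2 / 2 * β := by positivity
  have key := eq_zero_of_deriv_zero hT
    (h := fun s => GO (γ ^ 2 / 2) (Real.sqrt 2 / 2 * β) (μ s) - s) ?_ ?_ ?_
  · intro s hs; have := key s hs; linarith
  · exact ((continuous_GO ha hc).comp_continuousOn hcont).sub continuousOn_id
  · simp [h0, GO_zero]
  · intro s hs
    have hμs := hpos s hs
    have hd : HasDerivWithinAt (fun x => GO (γ ^ 2 / 2) (Real.sqrt 2 / 2 * β) (μ x) - x)
        (gO (γ ^ 2 / 2) (Real.sqrt 2 / 2 * β) (μ s) *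
          (γ ^ 2 / (2 * μ s) + Real.sqrt 2 / 2 * β) - 1) (Set.Icc 0 T) s :=
      ((hasDerivAt_GO ha hc (μ s)).comp_hasDerivWithinAt s (hderiv s hs)).sub
        (hasDerivWithinAt_id s _)
    have hval : gO (γ ^ 2 / 2) (Real.sqrt 2 / 2 * β) (μ s) *
        (γ ^ 2 / (2 * μ s) + Real.sqrt 2 / 2 * β) - 1 = 0 := by
      rw [gO_of_nonneg hμs.le]
      have h1 : μ s ≠ 0 := hμs.ne'
      have h2 : γ ^ 2 / 2 + Real.sqrt 2 / 2 * β * μ s ≠ 0 := by positivity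
      field_simp
      ring
    rwa [hval] at hd

lemma exists_sol_zero {T β : ℝ} (hT : 0 < T) (hβ : 0 < β) :
    ∃ μ : ℝ → ℝ, IsSolODE T β 0 μ := by
  have hc : 0 < Real.sqrt 2 / 2 * β := by positivity
  refine ⟨fun s => Real.sqrt 2 / 2 * β * s, (by fun_prop), ?_, by simp, ?_, ?_, ?_⟩
  · intro x _ y _ hxy
    exact (mul_lt_mul_iff_right₀ hc).2 hxy
  · intro s hs
    exact mul_nonneg hc.le hs.1
  · intro s hs
    exact mul_pos hc hs.1
  · intro s hs
    have hd := (hasDerivWithinAt_id s (Set.Icc 0 T)).const_mul (Real.sqrt 2 / 2 * β)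
    refine hd.congr_deriv ?_
    norm_num

lemma sol_eq_linear {T β : ℝ} (hT : 0 < T) {μ : ℝ → ℝ} (hμ : IsSolODE T β 0 μ) :
    ∀ s ∈ Set.Icc 0 T, μ s = Real.sqrt 2 / 2 * β * s := by
  obtain ⟨hcont, hmono, h0, hnn, hpos, hderiv⟩ := hμ
  have key := eq_zero_of_deriv_zero hT
    (h := fun s => μ s - Real.sqrt 2 / 2 * β * s) ?_ ?_ ?_
  · intro s hs; have := key s hs; linarith
  · exact hcont.sub (Continuous.continuousOn (by fun_prop))
  · simp [h0]
  · intro s hs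
    have hd := (hderiv s hs).sub ((hasDerivWithinAt_id s (Set.Icc 0 T)).const_mul
      (Real.sqrt 2 / 2 * β))
    refine hd.congr_deriv ?_
    norm_num

lemma sol_lintegral {T β γ : ℝ} (hT : 0 < T) (hβ : 0 ≤ β) (hγ : 0 < γ) {μ : ℝ → ℝ}
    (hμ : IsSolODE T β γ μ) :
    ∫⁻ s in Set.Ioc 0 T, ENNReal.ofReal (1 / μ s) < ⊤ := by
  obtain ⟨hcont, hmono, h0, hnn, hpos, hderiv⟩ := hμ
  have hf : MonotoneOn (fun s => (μ s) ^ 2 - γ ^ 2 * s) (Set.Icc 0 T) := by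
    apply monotoneOn_of_deriv_nonneg (convex_Icc 0 T) ((hcont.pow 2).sub (by fun_prop))
    · intro x hx
      rw [interior_Icc] at hx
      have hdx := (hderiv x ⟨hx.1, hx.2.le⟩).hasDerivAt (Icc_mem_nhds hx.1 hx.2)
      exact ((hdx.pow 2).sub ((hasDerivAt_id' x).const_mul
        (γ ^ 2))).differentiableAt.differentiableWithinAt
    · intro x hx
      rw [interior_Icc] at hx
      have hμx := hpos x ⟨hx.1, hx.2.le⟩
      have hdx := (hderiv x ⟨hx.1, hx.2.le⟩).hasDerivAt (Icc_mem_nhds hx.1 hx.2)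
      have hD := (hdx.pow 2).sub ((hasDerivAt_id' x).const_mul (γ ^ 2))
      rw [hD.deriv]
      have h1 : μ x ≠ 0 := hμx.ne'
      push_cast
      rw [pow_one]
      have hexp : 2 * μ x * (γ ^ 2 / (2 * μ x) + Real.sqrt 2 / 2 * β) - γ ^ 2 * 1 =
          Real.sqrt 2 * β * μ x := by
        field_simp
        ring
      rw [hexp]
      positivity
  have hbound : ∀ s ∈ Set.Ioc 0 T, γ * Real.sqrt s ≤ μ s := by
    intro s hs
    have h1 := hf ⟨le_rfl, hT.le⟩ ⟨hs.1.le, hs.2⟩ hs.1.le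
    simp only [h0] at h1
    have h2 : γ ^ 2 * s ≤ (μ s) ^ 2 := by nlinarith
    have h3 : γ * Real.sqrt s = Real.sqrt (γ ^ 2 * s) := by
      rw [Real.sqrt_mul (sq_nonneg γ), Real.sqrt_sq hγ.le]
    rw [h3, show μ s = Real.sqrt ((μ s) ^ 2) from (Real.sqrt_sq (hnn s ⟨hs.1.le, hs.2⟩)).symm]
    exact Real.sqrt_le_sqrt h2
  have hmeasg : Measurable fun s : ℝ => ENNReal.ofReal ((γ * Real.sqrt s)⁻¹) :=
    ((continuous_const.mul Real.continuous_sqrt).measurable.inv).ennreal_ofReal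
  have hle : ∫⁻ s in Set.Ioc 0 T, ENNReal.ofReal (1 / μ s) ≤
      ∫⁻ s in Set.Ioc 0 T, ENNReal.ofReal ((γ * Real.sqrt s)⁻¹) := by
    apply setLIntegral_mono hmeasg
    intro s hs
    apply ENNReal.ofReal_le_ofReal
    rw [one_div]
    have h2 : 0 < γ * Real.sqrt s := mul_pos hγ (Real.sqrt_pos.2 hs.1)
    exact inv_anti₀ h2 (hbound s hs)
  refine lt_of_le_of_lt hle ?_
  have hint : IntegrableOn (fun s : ℝ => (γ * Real.sqrt s)⁻¹) (Set.Ioc 0 T) := by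
    have h1 : IntegrableOn (fun s : ℝ => s ^ (-(1/2) : ℝ)) (Set.Ioc 0 T) :=
      (intervalIntegrable_iff_integrableOn_Ioc_of_le hT.le).mp
        (intervalIntegrable_rpow' (by norm_num))
    have h2 := h1.const_mul γ⁻¹
    apply (integrableOn_congr_fun ?_ measurableSet_Ioc).mp h2
    intro s hs
    show γ⁻¹ * s ^ (-(1/2) : ℝ) = (γ * Real.sqrt s)⁻¹
    rw [mul_inv, Real.sqrt_eq_rpow, ← Real.rpow_neg hs.1.le]
  calc ∫⁻ s in Set.Ioc 0 T, ENNReal.ofReal ((γ * Real.sqrt s)⁻¹)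
      ≤ ∫⁻ s in Set.Ioc 0 T, ‖(γ * Real.sqrt s)⁻¹‖ₑ := lintegral_ofReal_le_lintegral_enorm _
    _ < ⊤ := hint.2

end ODEAux

/-- The ODE (3.6)/(3.8): for `T > 0` and `β, γ ≥ 0` with `β + γ > 0`, there exists a
solution of the singular ODE, any two solutions agree on `[0, T]`, and if `γ > 0` then
`s ↦ 1/μ(s)` has finite Lebesgue integral on `(0, T]`. -/
theorem stmt_8 (T β γ : ℝ) (hT : 0 < T) (hβ : 0 ≤ β) (hγ : 0 ≤ γ) (hβγ : 0 < β + γ) :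
    (∃ μ : ℝ → ℝ, IsSolODE T β γ μ) ∧
    (∀ μ₁ μ₂ : ℝ → ℝ, IsSolODE T β γ μ₁ → IsSolODE T β γ μ₂ →
      Set.EqOn μ₁ μ₂ (Set.Icc 0 T)) ∧
    (0 < γ → ∀ μ : ℝ → ℝ, IsSolODE T β γ μ →
      ∫⁻ s in Set.Ioc 0 T, ENNReal.ofReal (1 / μ s) < ⊤) := by
  refine ⟨?_, ?_, ?_⟩
  · rcases eq_or_lt_of_le hγ with hγ0 | hγpos
    · have hβpos : 0 < β := by rw [← hγ0] at hβγ; linarith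
      rw [← hγ0]
      exact exists_sol_zero hT hβpos
    · exact exists_sol_pos hT hβ hγpos
  · intro μ₁ μ₂ h1 h2 s hs
    rcases eq_or_lt_of_le hγ with hγ0 | hγpos
    · rw [← hγ0] at h1 h2
      rw [sol_eq_linear hT h1 s hs, sol_eq_linear hT h2 s hs]
    · exact (strictMono_GO (by positivity : (0:ℝ) < γ ^ 2 / 2)
        (by positivity : (0:ℝ) ≤ Real.sqrt 2 / 2 * β)).injective
        ((sol_eq_GO hT hβ hγpos h1 s hs).trans (sol_eq_GO hT hβ hγpos h2 s hs).symm)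
  · intro hγpos μ hμ
    exact sol_lintegral hT hβ hγpos hμ
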